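/- Let λ and m be natural numbers, and for each α ∈ {1,…,m} let c_α : ℕ → ℤ be a function that is either (i) strictly increasing, or (ii) constant with |c_α(0)| > λ. Then there exists t with 0 ≤ t ≤ m(2λ+1) such that |c_α(t)| > λ for every α ∈ {1,…,m}. -/

import Mathlib

/-- Let `λ, m` be natural numbers, and for each `α ∈ {1,…,m}` let `c_α : ℕ → ℤ` be a
function that is either (i) strictly increasing, or (ii) constant with `|c_α(0)| > λ`.
Then there is `t` with `0 ≤ t ≤ m(2λ+1)` such that `|c_α(t)| > λ` for every `α`. -/
theorem stmt_8 (lam m : ℕ) (c : Fin m → ℕ → ℤ)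
    (hc : ∀ α, StrictMono (c α) ∨ ((∀ s t : ℕ, c α s = c α t) ∧ (lam : ℤ) < |c α 0|)) :
    ∃ t ≤ m * (2 * lam + 1), ∀ α : Fin m, (lam : ℤ) < |c α t| := by
  classical
  set N := m * (2 * lam + 1) with hN
  set R := Finset.range (N + 1) with hR
  set B : Fin m → Finset ℕ := fun α => R.filter (fun t => |c α t| ≤ (lam : ℤ)) with hB
  have hBcard : ∀ α, (B α).card ≤ 2 * lam + 1 := by
    intro α
    rcases hc α with hmono | ⟨hconst, hgt⟩
    · have hIcc : (Finset.Icc (-(lam : ℤ)) (lam : ℤ)).card = 2 * lam + 1 := by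
        rw [Int.card_Icc]; omega
      have := Finset.card_le_card_of_injOn (f := fun t => c α t)
        (s := B α) (t := Finset.Icc (-(lam : ℤ)) (lam : ℤ))
        (by
          intro t ht
          simp only [hB, Finset.mem_coe, Finset.mem_filter] at ht
          exact Finset.mem_Icc.mpr (abs_le.mp ht.2))
        (fun a _ b _ h => hmono.injective h)
      omega
    · have : B α = ∅ := by
        apply Finset.filter_false_of_mem
        intro t _
        have hgt' := hgt
        rw [hconst 0 t] at hgt'
        omega
      simp [this]
  have hUcard : (Finset.univ.biUnion B).card ≤ N := by
    calc (Finset.univ.biUnion B).card ≤ ∑ α : Fin m, (B α).card :=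
          Finset.card_biUnion_le
      _ ≤ ∑ _α : Fin m, (2 * lam + 1) := Finset.sum_le_sum (fun α _ => hBcard α)
      _ = N := by simp [hN, Finset.sum_const, mul_comm]
  have hex : ∃ t ∈ R, t ∉ Finset.univ.biUnion B := by
    by_contra h
    push_neg at h
    have := Finset.card_le_card h
    simp [hR] at this
    omega
  obtain ⟨t, htR, htB⟩ := hex
  refine ⟨t, by simpa [hR, Nat.lt_succ_iff] using htR, ?_⟩
  intro α
  by_contra hle
  push_neg at hle
  exact htB (Finset.mem_biUnion.mpr ⟨α, Finset.mem_univ α,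
    Finset.mem_filter.mpr ⟨htR, hle⟩⟩)
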